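/- Fix β real with 0 < |β| < 1, γ = (1−β²)^{−1/2}, and x₁, x₂ ∈ ℝ. Let A(x; β, x₁, x₂) = 4·arctan(sinh(γ x₁)/(β cosh(γ(x+x₂)))) and Aₜ(x; β, x₁, x₂) = 4β²γ cosh(γ(x+x₂)) cosh(γ x₁)/(β² cosh²(γ(x+x₂)) + sinh²(γ x₁)), and write A′ = ∂ₓA, A_{t,1} = ∂_{x₁}Aₜ, A_{t,2} = ∂_{x₂}Aₜ. Then: (a) when x₂ = 0, the functions x ↦ Aₜ(x) and x ↦ A_{t,1}(x) are even, and the functions x ↦ A′(x) and x ↦ A_{t,2}(x) are odd; (b) for all x₁, x₂ ∈ ℝ, the products Aₜ·A′ and A_{t,1}·A_{t,2} are integrable over ℝ and ∫_ℝ Aₜ(x) A′(x) dx = 0 and ∫_ℝ A_{t,1}(x) A_{t,2}(x) dx = 0. -/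

import Mathlib

open MeasureTheory

-- derivative of A in x
lemma hdA (b g s x₂ : ℝ) (hb : b ≠ 0) (x : ℝ) :
    HasDerivAt (fun y => 4 * Real.arctan (s / (b * Real.cosh (g * (y + x₂)))))
      (-4 * b * g * s * Real.sinh (g * (x + x₂))
        / (b ^ 2 * Real.cosh (g * (x + x₂)) ^ 2 + s ^ 2)) x := by
  have hc : 0 < Real.cosh (g * (x + x₂)) := Real.cosh_pos _
  have h1 : HasDerivAt (fun y : ℝ => g * (y + x₂)) g x := by
    simpa using ((hasDerivAt_id x).add_const x₂).const_mul g
  have h2 : HasDerivAt (fun y : ℝ => Real.cosh (g * (y + x₂)))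
      (Real.sinh (g * (x + x₂)) * g) x := h1.cosh
  have h3 : HasDerivAt (fun y : ℝ => s / (b * Real.cosh (g * (y + x₂))))
      ((0 * (b * Real.cosh (g * (x + x₂))) - s * (b * (Real.sinh (g * (x + x₂)) * g)))
        / (b * Real.cosh (g * (x + x₂))) ^ 2) x :=
    (hasDerivAt_const x s).div (h2.const_mul b) (by positivity)
  have h4 := ((Real.hasDerivAt_arctan (s / (b * Real.cosh (g * (x + x₂))))).comp x h3).const_mul 4
  refine h4.congr_deriv ?_
  have hD : 0 < b ^ 2 * Real.cosh (g * (x + x₂)) ^ 2 + s ^ 2 := by positivity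
  field_simp
  ring

-- derivative of At in y₁ at x₁, with c := cosh (g*(x+x₂)) fixed
lemma hdAt1 (b g c x₁ : ℝ) (hb : b ≠ 0) (hc : 0 < c) :
    HasDerivAt (fun y₁ => 4 * b ^ 2 * g * c * Real.cosh (g * y₁)
        / (b ^ 2 * c ^ 2 + Real.sinh (g * y₁) ^ 2))
      (4 * b ^ 2 * g ^ 2 * c * Real.sinh (g * x₁)
          * (b ^ 2 * c ^ 2 + Real.sinh (g * x₁) ^ 2 - 2 * Real.cosh (g * x₁) ^ 2)
        / (b ^ 2 * c ^ 2 + Real.sinh (g * x₁) ^ 2) ^ 2) x₁ := by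
  have h1 : HasDerivAt (fun y : ℝ => g * y) g x₁ := by
    simpa using (hasDerivAt_id x₁).const_mul g
  have h2 : HasDerivAt (fun y : ℝ => Real.cosh (g * y)) (Real.sinh (g * x₁) * g) x₁ := h1.cosh
  have h3 : HasDerivAt (fun y : ℝ => Real.sinh (g * y)) (Real.cosh (g * x₁) * g) x₁ := h1.sinh
  have hnum : HasDerivAt (fun y₁ => 4 * b ^ 2 * g * c * Real.cosh (g * y₁))
      (4 * b ^ 2 * g * c * (Real.sinh (g * x₁) * g)) x₁ := h2.const_mul _
  have hden : HasDerivAt (fun y₁ => b ^ 2 * c ^ 2 + Real.sinh (g * y₁) ^ 2)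
      (0 + 2 * Real.sinh (g * x₁) ^ 1 * (Real.cosh (g * x₁) * g)) x₁ :=
    (hasDerivAt_const x₁ (b ^ 2 * c ^ 2)).add (h3.pow 2)
  have hD : 0 < b ^ 2 * c ^ 2 + Real.sinh (g * x₁) ^ 2 := by positivity
  have h4 := hnum.div hden hD.ne'
  refine h4.congr_deriv ?_
  field_simp
  ring

-- derivative of At in y₂ at x₂
lemma hdAt2 (b g ch s x x₂ : ℝ) (hb : b ≠ 0) :
    HasDerivAt (fun y₂ => 4 * b ^ 2 * g * Real.cosh (g * (x + y₂)) * ch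
        / (b ^ 2 * Real.cosh (g * (x + y₂)) ^ 2 + s ^ 2))
      (4 * b ^ 2 * g ^ 2 * ch * Real.sinh (g * (x + x₂))
          * (s ^ 2 - b ^ 2 * Real.cosh (g * (x + x₂)) ^ 2)
        / (b ^ 2 * Real.cosh (g * (x + x₂)) ^ 2 + s ^ 2) ^ 2) x₂ := by
  have hc : 0 < Real.cosh (g * (x + x₂)) := Real.cosh_pos _
  have h1 : HasDerivAt (fun y : ℝ => g * (x + y)) g x₂ := by
    simpa using ((hasDerivAt_id x₂).const_add x).const_mul g
  have h2 : HasDerivAt (fun y : ℝ => Real.cosh (g * (x + y))) (Real.sinh (g * (x + x₂)) * g) x₂ :=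
    h1.cosh
  have hnum : HasDerivAt (fun y₂ => 4 * b ^ 2 * g * Real.cosh (g * (x + y₂)) * ch)
      (4 * b ^ 2 * g * (Real.sinh (g * (x + x₂)) * g) * ch) x₂ := (h2.const_mul _).mul_const ch
  have hden : HasDerivAt (fun y₂ => b ^ 2 * Real.cosh (g * (x + y₂)) ^ 2 + s ^ 2)
      (b ^ 2 * (2 * Real.cosh (g * (x + x₂)) ^ 1 * (Real.sinh (g * (x + x₂)) * g))) x₂ := by
    simpa using ((h2.pow 2).const_mul (b ^ 2)).add_const (s ^ 2)
  have hD : 0 < b ^ 2 * Real.cosh (g * (x + x₂)) ^ 2 + s ^ 2 := by positivity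
  have h4 := hnum.div hden hD.ne'
  refine h4.congr_deriv ?_
  field_simp
  ring

lemma integral_shift_odd (x₂ : ℝ) (G : ℝ → ℝ) (hodd : ∀ u, G (-u) = -G u) :
    (∫ x : ℝ, G (x + x₂)) = 0 := by
  rw [integral_add_right_eq_self G x₂]
  have h1 : (∫ x : ℝ, G (-x)) = ∫ x : ℝ, G x := integral_neg_eq_self G volume
  have h2 : (∫ x : ℝ, G (-x)) = -∫ x : ℝ, G x := by
    simp_rw [hodd]; exact integral_neg G
  linarith

lemma integrable_shift_decay (g x₂ : ℝ) (hg : 0 < g) (G : ℝ → ℝ) (hcont : Continuous G)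
    (K : ℝ) (hb : ∀ u, |G u| * Real.cosh (g * u) ^ 2 ≤ K) :
    Integrable (fun x : ℝ => G (x + x₂)) := by
  set m : ℝ := min 1 (g ^ 2) with hm
  have hm0 : 0 < m := lt_min one_pos (by positivity)
  have hK0 : 0 ≤ K := le_trans (by positivity) (hb 0)
  apply Integrable.mono' ((integrable_inv_one_add_sq).const_mul (2 * (1 + x₂ ^ 2) * K / m))
  · exact (hcont.comp (continuous_id.add continuous_const)).aestronglyMeasurable
  · filter_upwards with x
    have hc : 0 < Real.cosh (g * (x + x₂)) := Real.cosh_pos _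
    have hsinh : (g * (x + x₂)) ^ 2 ≤ Real.sinh (g * (x + x₂)) ^ 2 := by
      have h1 : |g * (x + x₂)| ≤ Real.sinh |g * (x + x₂)| :=
        Real.self_le_sinh_iff.2 (abs_nonneg _)
      have h2 : Real.sinh |g * (x + x₂)| = |Real.sinh (g * (x + x₂))| :=
        (Real.abs_sinh _).symm
      calc (g * (x + x₂)) ^ 2 = |g * (x + x₂)| ^ 2 := (sq_abs _).symm
        _ ≤ |Real.sinh (g * (x + x₂))| ^ 2 := by
            exact pow_le_pow_left₀ (abs_nonneg _) (h1.trans_eq h2) 2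
        _ = Real.sinh (g * (x + x₂)) ^ 2 := sq_abs _
    have hcosh_sq : 1 + g ^ 2 * (x + x₂) ^ 2 ≤ Real.cosh (g * (x + x₂)) ^ 2 := by
      have := Real.cosh_sq_sub_sinh_sq (g * (x + x₂))
      nlinarith
    have hlow : m * (1 + x ^ 2) / (2 * (1 + x₂ ^ 2)) ≤ Real.cosh (g * (x + x₂)) ^ 2 := by
      rw [div_le_iff₀ (by positivity)]
      have hm1 : m ≤ 1 := min_le_left _ _
      have hm2 : m ≤ g ^ 2 := min_le_right _ _
      nlinarith [sq_nonneg (x + 2 * x₂), sq_nonneg (x * x₂), sq_nonneg x, sq_nonneg x₂,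
        sq_nonneg (x + x₂), mul_nonneg hm0.le (sq_nonneg (x + x₂))]
    have hGle : |G (x + x₂)| ≤ K / Real.cosh (g * (x + x₂)) ^ 2 := by
      rw [le_div_iff₀ (by positivity)]
      exact hb (x + x₂)
    have h2 : K / Real.cosh (g * (x + x₂)) ^ 2
        ≤ K / (m * (1 + x ^ 2) / (2 * (1 + x₂ ^ 2))) :=
      div_le_div_of_nonneg_left hK0 (by positivity) hlow
    calc ‖G (x + x₂)‖ = |G (x + x₂)| := rfl
      _ ≤ K / (m * (1 + x ^ 2) / (2 * (1 + x₂ ^ 2))) := hGle.trans h2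
      _ = 2 * (1 + x₂ ^ 2) * K / m * (1 + x ^ 2)⁻¹ := by
          field_simp

lemma abs_sinh_le_cosh (t : ℝ) : |Real.sinh t| ≤ Real.cosh t := by
  rw [abs_le]
  constructor
  · nlinarith [Real.cosh_add_sinh t, Real.exp_pos t]
  · nlinarith [Real.cosh_sub_sinh t, Real.exp_pos (-t)]

-- bound for the first integrand
lemma bound1 (b g s ch : ℝ) (hb : b ≠ 0) (hb1 : |b| ≤ 1) (hg : 0 < g)
    (hs : |s| ≤ ch) (hch : 1 ≤ ch) (u : ℝ) :
    |4 * b ^ 2 * g * Real.cosh (g * u) * ch / (b ^ 2 * Real.cosh (g * u) ^ 2 + s ^ 2)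
        * (-4 * b * g * s * Real.sinh (g * u) / (b ^ 2 * Real.cosh (g * u) ^ 2 + s ^ 2))|
      * Real.cosh (g * u) ^ 2 ≤ 16 * g ^ 2 * ch ^ 2 / b ^ 2 := by
  set c := Real.cosh (g * u) with hc
  set sh := Real.sinh (g * u) with hsh
  have hc0 : 0 < c := Real.cosh_pos _
  have hc1 : 1 ≤ c := Real.one_le_cosh _
  have hshc : |sh| ≤ c := abs_sinh_le_cosh _
  have hch0 : 0 < ch := lt_of_lt_of_le one_pos hch
  have hD : 0 < b ^ 2 * c ^ 2 + s ^ 2 := by positivity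
  set D := b ^ 2 * c ^ 2 + s ^ 2 with hDd
  rw [div_mul_div_comm, abs_div, abs_of_pos (by positivity : (0:ℝ) < D * D)]
  rw [div_mul_eq_mul_div, div_le_div_iff₀ (by positivity) (by positivity)]
  have hnum : |4 * b ^ 2 * g * c * ch * (-4 * b * g * s * sh)|
      ≤ (4 * b ^ 2 * g * c * ch) * (4 * |b| * g * (ch * c)) := by
    have e : 4 * b ^ 2 * g * c * ch * (-4 * b * g * s * sh)
        = (4 * b ^ 2 * g * c * ch) * ((-4) * (b * (g * (s * sh)))) := by ring
    rw [e, abs_mul, abs_of_nonneg (by positivity : (0:ℝ) ≤ 4 * b ^ 2 * g * c * ch)]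
    have : |(-4 : ℝ)| = 4 := by norm_num
    gcongr
    calc |(-4) * (b * (g * (s * sh)))| = 4 * (|b| * (g * (|s| * |sh|))) := by
          rw [abs_mul, abs_mul, abs_mul, abs_mul, abs_of_nonneg hg.le]; norm_num
      _ ≤ 4 * (|b| * (g * (ch * c))) := by gcongr
      _ = 4 * |b| * g * (ch * c) := by ring
  calc |4 * b ^ 2 * g * c * ch * (-4 * b * g * s * sh)| * c ^ 2 * b ^ 2
      ≤ ((4 * b ^ 2 * g * c * ch) * (4 * |b| * g * (ch * c))) * c ^ 2 * b ^ 2 := by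
        gcongr
    _ = 16 * b ^ 4 * |b| * g ^ 2 * ch ^ 2 * c ^ 4 := by ring
    _ ≤ 16 * b ^ 4 * 1 * g ^ 2 * ch ^ 2 * c ^ 4 := by gcongr
    _ = 16 * g ^ 2 * ch ^ 2 * ((b ^ 2 * c ^ 2) * (b ^ 2 * c ^ 2)) := by ring
    _ ≤ 16 * g ^ 2 * ch ^ 2 * (D * D) := by
        have hle : b ^ 2 * c ^ 2 ≤ D := by rw [hDd]; nlinarith [sq_nonneg s]
        have h2 : (b ^ 2 * c ^ 2) * (b ^ 2 * c ^ 2) ≤ D * D := by nlinarith [sq_nonneg (b*c)]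
        exact mul_le_mul_of_nonneg_left h2 (by positivity)

-- bound for the second integrand
set_option maxHeartbeats 1000000 in
lemma bound2 (b g s ch : ℝ) (hb : b ≠ 0) (hb1 : |b| ≤ 1) (hg : 0 < g)
    (hs : |s| ≤ ch) (hch : 1 ≤ ch) (u : ℝ) :
    |4 * b ^ 2 * g ^ 2 * Real.cosh (g * u) * s
          * (b ^ 2 * Real.cosh (g * u) ^ 2 + s ^ 2 - 2 * ch ^ 2)
          / (b ^ 2 * Real.cosh (g * u) ^ 2 + s ^ 2) ^ 2
        * (4 * b ^ 2 * g ^ 2 * ch * Real.sinh (g * u)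
            * (s ^ 2 - b ^ 2 * Real.cosh (g * u) ^ 2)
          / (b ^ 2 * Real.cosh (g * u) ^ 2 + s ^ 2) ^ 2)|
      * Real.cosh (g * u) ^ 2
      ≤ 16 * g ^ 4 * ch ^ 2 * (b ^ 2 + 2 * ch ^ 2) / b ^ 2 := by
  set c := Real.cosh (g * u) with hc
  set sh := Real.sinh (g * u) with hshd
  have hc0 : 0 < c := Real.cosh_pos _
  have hc1 : 1 ≤ c := Real.one_le_cosh _
  have hshc : |sh| ≤ c := abs_sinh_le_cosh _
  have hch0 : 0 < ch := lt_of_lt_of_le one_pos hch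
  have hD : 0 < b ^ 2 * c ^ 2 + s ^ 2 := by positivity
  set D := b ^ 2 * c ^ 2 + s ^ 2 with hDd
  have hcc : 1 ≤ c ^ 2 := by nlinarith
  have hbD : b ^ 2 ≤ D := by
    rw [hDd]
    nlinarith [mul_le_mul_of_nonneg_left hcc (sq_nonneg b), sq_nonneg s]
  have hbcD : b ^ 2 * c ^ 2 ≤ D := by rw [hDd]; nlinarith [sq_nonneg s]
  rw [div_mul_div_comm, abs_div, abs_of_pos (by positivity : (0:ℝ) < D ^ 2 * D ^ 2)]
  rw [div_mul_eq_mul_div, div_le_div_iff₀ (by positivity) (by positivity)]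
  have h1 : |4 * b ^ 2 * g ^ 2 * c * s * (b ^ 2 * c ^ 2 + s ^ 2 - 2 * ch ^ 2)|
      ≤ (4 * b ^ 2 * g ^ 2 * c) * (ch * (D + 2 * ch ^ 2)) := by
    have e : 4 * b ^ 2 * g ^ 2 * c * s * (b ^ 2 * c ^ 2 + s ^ 2 - 2 * ch ^ 2)
        = (4 * b ^ 2 * g ^ 2 * c) * (s * (b ^ 2 * c ^ 2 + s ^ 2 - 2 * ch ^ 2)) := by ring
    rw [e, abs_mul, abs_of_nonneg (by positivity : (0:ℝ) ≤ 4 * b ^ 2 * g ^ 2 * c), abs_mul]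
    have hX : |b ^ 2 * c ^ 2 + s ^ 2 - 2 * ch ^ 2| ≤ D + 2 * ch ^ 2 := by
      rw [abs_le]
      constructor <;> nlinarith [sq_nonneg s, sq_nonneg ch, sq_nonneg (b*c)]
    gcongr
  have h2 : |4 * b ^ 2 * g ^ 2 * ch * sh * (s ^ 2 - b ^ 2 * c ^ 2)|
      ≤ (4 * b ^ 2 * g ^ 2 * ch) * (c * D) := by
    have e : 4 * b ^ 2 * g ^ 2 * ch * sh * (s ^ 2 - b ^ 2 * c ^ 2)
        = (4 * b ^ 2 * g ^ 2 * ch) * (sh * (s ^ 2 - b ^ 2 * c ^ 2)) := by ring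
    rw [e, abs_mul, abs_of_nonneg (by positivity : (0:ℝ) ≤ 4 * b ^ 2 * g ^ 2 * ch), abs_mul]
    have hX : |s ^ 2 - b ^ 2 * c ^ 2| ≤ D := by
      rw [abs_le]
      constructor <;> nlinarith [sq_nonneg s, sq_nonneg (b*c)]
    gcongr
  have hN : |4 * b ^ 2 * g ^ 2 * c * s * (b ^ 2 * c ^ 2 + s ^ 2 - 2 * ch ^ 2)
        * (4 * b ^ 2 * g ^ 2 * ch * sh * (s ^ 2 - b ^ 2 * c ^ 2))|
      ≤ ((4 * b ^ 2 * g ^ 2 * c) * (ch * (D + 2 * ch ^ 2)))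
          * ((4 * b ^ 2 * g ^ 2 * ch) * (c * D)) := by
    rw [abs_mul]
    exact mul_le_mul h1 h2 (abs_nonneg _) (by positivity)
  calc |4 * b ^ 2 * g ^ 2 * c * s * (b ^ 2 * c ^ 2 + s ^ 2 - 2 * ch ^ 2)
        * (4 * b ^ 2 * g ^ 2 * ch * sh * (s ^ 2 - b ^ 2 * c ^ 2))| * c ^ 2 * b ^ 2
      ≤ ((4 * b ^ 2 * g ^ 2 * c) * (ch * (D + 2 * ch ^ 2)))
          * ((4 * b ^ 2 * g ^ 2 * ch) * (c * D)) * c ^ 2 * b ^ 2 := by gcongr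
    _ = 16 * g ^ 4 * ch ^ 2 * ((b ^ 2 * c ^ 2) * (b ^ 2 * c ^ 2))
          * (b ^ 2 * (D + 2 * ch ^ 2)) * D := by ring
    _ ≤ 16 * g ^ 4 * ch ^ 2 * (D * D) * ((b ^ 2 + 2 * ch ^ 2) * D) * D := by
        have hle1 : (b ^ 2 * c ^ 2) * (b ^ 2 * c ^ 2) ≤ D * D := by
          nlinarith [sq_nonneg (b*c)]
        have hle2 : b ^ 2 * (D + 2 * ch ^ 2) ≤ (b ^ 2 + 2 * ch ^ 2) * D := by nlinarith
        gcongr <;> positivity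
    _ = 16 * g ^ 4 * ch ^ 2 * (b ^ 2 + 2 * ch ^ 2) * (D ^ 2 * D ^ 2) := by ring


/-- **Parity and orthogonality for the kink-antikink profile (Appendix B.2).**
For the kink-antikink profile `A(x;β,x₁,x₂)` and its time-derivative profile
`Aₜ(x;β,x₁,x₂)`: (a) when `x₂ = 0`, `x ↦ Aₜ` and `x ↦ ∂_{x₁}Aₜ` are even while
`x ↦ ∂ₓA` and `x ↦ ∂_{x₂}Aₜ` are odd; (b) for all `x₁, x₂`, the products `Aₜ·∂ₓA` and
`∂_{x₁}Aₜ·∂_{x₂}Aₜ` are integrable over `ℝ` with vanishing integrals. -/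
theorem kink_antikink_parity_orthogonality (β : ℝ) (hβ0 : 0 < |β|) (hβ1 : |β| < 1)
    (γ : ℝ) (hγ : γ = (1 - β ^ 2) ^ (-(1 / 2 : ℝ)))
    (A At : ℝ → ℝ → ℝ → ℝ)
    (hA : ∀ x y₁ y₂ : ℝ, A x y₁ y₂
      = 4 * Real.arctan (Real.sinh (γ * y₁) / (β * Real.cosh (γ * (x + y₂)))))
    (hAt : ∀ x y₁ y₂ : ℝ, At x y₁ y₂
      = 4 * β ^ 2 * γ * Real.cosh (γ * (x + y₂)) * Real.cosh (γ * y₁)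
          / (β ^ 2 * (Real.cosh (γ * (x + y₂))) ^ 2 + (Real.sinh (γ * y₁)) ^ 2)) :
    -- (a) parity at x₂ = 0
    (∀ x₁ x : ℝ, At (-x) x₁ 0 = At x x₁ 0) ∧
    (∀ x₁ x : ℝ, deriv (fun y₁ => At (-x) y₁ 0) x₁ = deriv (fun y₁ => At x y₁ 0) x₁) ∧
    (∀ x₁ x : ℝ, deriv (fun y => A y x₁ 0) (-x) = -deriv (fun y => A y x₁ 0) x) ∧
    (∀ x₁ x : ℝ, deriv (fun y₂ => At (-x) x₁ y₂) 0 = -deriv (fun y₂ => At x x₁ y₂) 0) ∧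
    -- (b) orthogonality for all shifts
    (∀ x₁ x₂ : ℝ,
      Integrable (fun x : ℝ => At x x₁ x₂ * deriv (fun y => A y x₁ x₂) x) ∧
      Integrable (fun x : ℝ =>
        deriv (fun y₁ => At x y₁ x₂) x₁ * deriv (fun y₂ => At x x₁ y₂) x₂) ∧
      (∫ x : ℝ, At x x₁ x₂ * deriv (fun y => A y x₁ x₂) x) = 0 ∧
      (∫ x : ℝ, deriv (fun y₁ => At x y₁ x₂) x₁ * deriv (fun y₂ => At x x₁ y₂) x₂) = 0) := by
  have hb : β ≠ 0 := abs_pos.mp hβ0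
  have hb2 : 0 < β ^ 2 := lt_of_le_of_ne (sq_nonneg β) (Ne.symm (pow_ne_zero 2 hb))
  have hβsq : β ^ 2 < 1 := by nlinarith [sq_abs β, abs_nonneg β]
  have hγpos : 0 < γ := hγ ▸ Real.rpow_pos_of_pos (by nlinarith) _
  have hb1 : |β| ≤ 1 := hβ1.le
  refine ⟨?_, ?_, ?_, ?_, ?_⟩
  · intro x₁ x
    rw [hAt, hAt, show γ * (-x + 0) = -(γ * (x + 0)) by ring, Real.cosh_neg]
  · intro x₁ x
    have hfun : ∀ z : ℝ, (fun y₁ => At z y₁ 0) = fun y₁ =>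
        4 * β ^ 2 * γ * Real.cosh (γ * (z + 0)) * Real.cosh (γ * y₁)
          / (β ^ 2 * Real.cosh (γ * (z + 0)) ^ 2 + Real.sinh (γ * y₁) ^ 2) :=
      fun z => funext fun y₁ => hAt z y₁ 0
    rw [hfun, hfun, (hdAt1 β γ _ x₁ hb (Real.cosh_pos _)).deriv,
      (hdAt1 β γ _ x₁ hb (Real.cosh_pos _)).deriv,
      show γ * (-x + 0) = -(γ * (x + 0)) by ring, Real.cosh_neg]
  · intro x₁ x
    have hfun : (fun y => A y x₁ 0) = fun y =>
        4 * Real.arctan (Real.sinh (γ * x₁) / (β * Real.cosh (γ * (y + 0)))) :=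
      funext fun y => hA y x₁ 0
    rw [hfun, (hdA β γ _ 0 hb (-x)).deriv, (hdA β γ _ 0 hb x).deriv,
      show γ * (-x + 0) = -(γ * (x + 0)) by ring, Real.cosh_neg, Real.sinh_neg]
    ring
  · intro x₁ x
    have hfun : ∀ z : ℝ, (fun y₂ => At z x₁ y₂) = fun y₂ =>
        4 * β ^ 2 * γ * Real.cosh (γ * (z + y₂)) * Real.cosh (γ * x₁)
          / (β ^ 2 * Real.cosh (γ * (z + y₂)) ^ 2 + Real.sinh (γ * x₁) ^ 2) :=
      fun z => funext fun y₂ => hAt z x₁ y₂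
    rw [hfun, hfun, (hdAt2 β γ _ _ (-x) 0 hb).deriv, (hdAt2 β γ _ _ x 0 hb).deriv,
      show γ * (-x + 0) = -(γ * (x + 0)) by ring, Real.cosh_neg, Real.sinh_neg]
    ring
  · intro x₁ x₂
    have hs : |Real.sinh (γ * x₁)| ≤ Real.cosh (γ * x₁) := abs_sinh_le_cosh _
    have hch : 1 ≤ Real.cosh (γ * x₁) := Real.one_le_cosh _
    have hdenne : ∀ u : ℝ,
        β ^ 2 * Real.cosh (γ * u) ^ 2 + Real.sinh (γ * x₁) ^ 2 ≠ 0 :=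
      fun u => (add_pos_of_pos_of_nonneg
        (mul_pos hb2 (pow_pos (Real.cosh_pos _) 2)) (sq_nonneg _)).ne'
    have hdenc : Continuous fun u : ℝ =>
        β ^ 2 * Real.cosh (γ * u) ^ 2 + Real.sinh (γ * x₁) ^ 2 := by fun_prop
    -- first integrand
    have hcont1 : Continuous (fun u : ℝ =>
        4 * β ^ 2 * γ * Real.cosh (γ * u) * Real.cosh (γ * x₁)
          / (β ^ 2 * Real.cosh (γ * u) ^ 2 + Real.sinh (γ * x₁) ^ 2)
        * (-4 * β * γ * Real.sinh (γ * x₁) * Real.sinh (γ * u)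
          / (β ^ 2 * Real.cosh (γ * u) ^ 2 + Real.sinh (γ * x₁) ^ 2))) :=
      by refine Continuous.mul (Continuous.div ?_ hdenc hdenne)
           (Continuous.div ?_ hdenc hdenne) <;> fun_prop
    have hint1 : Integrable (fun x : ℝ => (fun u : ℝ =>
        4 * β ^ 2 * γ * Real.cosh (γ * u) * Real.cosh (γ * x₁)
          / (β ^ 2 * Real.cosh (γ * u) ^ 2 + Real.sinh (γ * x₁) ^ 2)
        * (-4 * β * γ * Real.sinh (γ * x₁) * Real.sinh (γ * u)
          / (β ^ 2 * Real.cosh (γ * u) ^ 2 + Real.sinh (γ * x₁) ^ 2))) (x + x₂)) :=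
      integrable_shift_decay γ x₂ hγpos _ hcont1
        (16 * γ ^ 2 * Real.cosh (γ * x₁) ^ 2 / β ^ 2)
        (fun u => bound1 β γ (Real.sinh (γ * x₁)) (Real.cosh (γ * x₁)) hb hb1 hγpos hs hch u)
    have hzero1 : (∫ x : ℝ, (fun u : ℝ =>
        4 * β ^ 2 * γ * Real.cosh (γ * u) * Real.cosh (γ * x₁)
          / (β ^ 2 * Real.cosh (γ * u) ^ 2 + Real.sinh (γ * x₁) ^ 2)
        * (-4 * β * γ * Real.sinh (γ * x₁) * Real.sinh (γ * u)
          / (β ^ 2 * Real.cosh (γ * u) ^ 2 + Real.sinh (γ * x₁) ^ 2))) (x + x₂)) = 0 :=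
      integral_shift_odd x₂ (fun u : ℝ =>
        4 * β ^ 2 * γ * Real.cosh (γ * u) * Real.cosh (γ * x₁)
          / (β ^ 2 * Real.cosh (γ * u) ^ 2 + Real.sinh (γ * x₁) ^ 2)
        * (-4 * β * γ * Real.sinh (γ * x₁) * Real.sinh (γ * u)
          / (β ^ 2 * Real.cosh (γ * u) ^ 2 + Real.sinh (γ * x₁) ^ 2))) (fun u => by
        simp only [mul_neg, Real.cosh_neg, Real.sinh_neg]; ring)
    have key1 : ∀ x : ℝ, At x x₁ x₂ * deriv (fun y => A y x₁ x₂) x = (fun u : ℝ =>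
        4 * β ^ 2 * γ * Real.cosh (γ * u) * Real.cosh (γ * x₁)
          / (β ^ 2 * Real.cosh (γ * u) ^ 2 + Real.sinh (γ * x₁) ^ 2)
        * (-4 * β * γ * Real.sinh (γ * x₁) * Real.sinh (γ * u)
          / (β ^ 2 * Real.cosh (γ * u) ^ 2 + Real.sinh (γ * x₁) ^ 2))) (x + x₂) := by
      intro x
      have hfunA : (fun y => A y x₁ x₂) = fun y =>
          4 * Real.arctan (Real.sinh (γ * x₁) / (β * Real.cosh (γ * (y + x₂)))) :=
        funext fun y => hA y x₁ x₂
      rw [hAt, hfunA, (hdA β γ (Real.sinh (γ * x₁)) x₂ hb x).deriv]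
    -- second integrand
    have hdenne2 : ∀ u : ℝ,
        (β ^ 2 * Real.cosh (γ * u) ^ 2 + Real.sinh (γ * x₁) ^ 2) ^ 2 ≠ 0 :=
      fun u => pow_ne_zero 2 (hdenne u)
    have hcont2 : Continuous (fun u : ℝ =>
        4 * β ^ 2 * γ ^ 2 * Real.cosh (γ * u) * Real.sinh (γ * x₁)
          * (β ^ 2 * Real.cosh (γ * u) ^ 2 + Real.sinh (γ * x₁) ^ 2
              - 2 * Real.cosh (γ * x₁) ^ 2)
          / (β ^ 2 * Real.cosh (γ * u) ^ 2 + Real.sinh (γ * x₁) ^ 2) ^ 2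
        * (4 * β ^ 2 * γ ^ 2 * Real.cosh (γ * x₁) * Real.sinh (γ * u)
            * (Real.sinh (γ * x₁) ^ 2 - β ^ 2 * Real.cosh (γ * u) ^ 2)
          / (β ^ 2 * Real.cosh (γ * u) ^ 2 + Real.sinh (γ * x₁) ^ 2) ^ 2)) :=
      by refine Continuous.mul (Continuous.div ?_ ?_ hdenne2)
           (Continuous.div ?_ ?_ hdenne2) <;> fun_prop
    have hint2 : Integrable (fun x : ℝ => (fun u : ℝ =>
        4 * β ^ 2 * γ ^ 2 * Real.cosh (γ * u) * Real.sinh (γ * x₁)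
          * (β ^ 2 * Real.cosh (γ * u) ^ 2 + Real.sinh (γ * x₁) ^ 2
              - 2 * Real.cosh (γ * x₁) ^ 2)
          / (β ^ 2 * Real.cosh (γ * u) ^ 2 + Real.sinh (γ * x₁) ^ 2) ^ 2
        * (4 * β ^ 2 * γ ^ 2 * Real.cosh (γ * x₁) * Real.sinh (γ * u)
            * (Real.sinh (γ * x₁) ^ 2 - β ^ 2 * Real.cosh (γ * u) ^ 2)
          / (β ^ 2 * Real.cosh (γ * u) ^ 2 + Real.sinh (γ * x₁) ^ 2) ^ 2)) (x + x₂)) :=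
      integrable_shift_decay γ x₂ hγpos _ hcont2
        (16 * γ ^ 4 * Real.cosh (γ * x₁) ^ 2 * (β ^ 2 + 2 * Real.cosh (γ * x₁) ^ 2) / β ^ 2)
        (fun u => bound2 β γ (Real.sinh (γ * x₁)) (Real.cosh (γ * x₁)) hb hb1 hγpos hs hch u)
    have hzero2 : (∫ x : ℝ, (fun u : ℝ =>
        4 * β ^ 2 * γ ^ 2 * Real.cosh (γ * u) * Real.sinh (γ * x₁)
          * (β ^ 2 * Real.cosh (γ * u) ^ 2 + Real.sinh (γ * x₁) ^ 2
              - 2 * Real.cosh (γ * x₁) ^ 2)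
          / (β ^ 2 * Real.cosh (γ * u) ^ 2 + Real.sinh (γ * x₁) ^ 2) ^ 2
        * (4 * β ^ 2 * γ ^ 2 * Real.cosh (γ * x₁) * Real.sinh (γ * u)
            * (Real.sinh (γ * x₁) ^ 2 - β ^ 2 * Real.cosh (γ * u) ^ 2)
          / (β ^ 2 * Real.cosh (γ * u) ^ 2 + Real.sinh (γ * x₁) ^ 2) ^ 2)) (x + x₂)) = 0 :=
      integral_shift_odd x₂ (fun u : ℝ =>
        4 * β ^ 2 * γ ^ 2 * Real.cosh (γ * u) * Real.sinh (γ * x₁)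
          * (β ^ 2 * Real.cosh (γ * u) ^ 2 + Real.sinh (γ * x₁) ^ 2
              - 2 * Real.cosh (γ * x₁) ^ 2)
          / (β ^ 2 * Real.cosh (γ * u) ^ 2 + Real.sinh (γ * x₁) ^ 2) ^ 2
        * (4 * β ^ 2 * γ ^ 2 * Real.cosh (γ * x₁) * Real.sinh (γ * u)
            * (Real.sinh (γ * x₁) ^ 2 - β ^ 2 * Real.cosh (γ * u) ^ 2)
          / (β ^ 2 * Real.cosh (γ * u) ^ 2 + Real.sinh (γ * x₁) ^ 2) ^ 2)) (fun u => by
        simp only [mul_neg, Real.cosh_neg, Real.sinh_neg]; ring)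
    have key2 : ∀ x : ℝ, deriv (fun y₁ => At x y₁ x₂) x₁ * deriv (fun y₂ => At x x₁ y₂) x₂
        = (fun u : ℝ =>
        4 * β ^ 2 * γ ^ 2 * Real.cosh (γ * u) * Real.sinh (γ * x₁)
          * (β ^ 2 * Real.cosh (γ * u) ^ 2 + Real.sinh (γ * x₁) ^ 2
              - 2 * Real.cosh (γ * x₁) ^ 2)
          / (β ^ 2 * Real.cosh (γ * u) ^ 2 + Real.sinh (γ * x₁) ^ 2) ^ 2
        * (4 * β ^ 2 * γ ^ 2 * Real.cosh (γ * x₁) * Real.sinh (γ * u)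
            * (Real.sinh (γ * x₁) ^ 2 - β ^ 2 * Real.cosh (γ * u) ^ 2)
          / (β ^ 2 * Real.cosh (γ * u) ^ 2 + Real.sinh (γ * x₁) ^ 2) ^ 2)) (x + x₂) := by
      intro x
      have hfun1 : (fun y₁ => At x y₁ x₂) = fun y₁ =>
          4 * β ^ 2 * γ * Real.cosh (γ * (x + x₂)) * Real.cosh (γ * y₁)
            / (β ^ 2 * Real.cosh (γ * (x + x₂)) ^ 2 + Real.sinh (γ * y₁) ^ 2) :=
        funext fun y₁ => hAt x y₁ x₂
      have hfun2 : (fun y₂ => At x x₁ y₂) = fun y₂ =>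
          4 * β ^ 2 * γ * Real.cosh (γ * (x + y₂)) * Real.cosh (γ * x₁)
            / (β ^ 2 * Real.cosh (γ * (x + y₂)) ^ 2 + Real.sinh (γ * x₁) ^ 2) :=
        funext fun y₂ => hAt x x₁ y₂
      rw [hfun1, hfun2, (hdAt1 β γ (Real.cosh (γ * (x + x₂))) x₁ hb (Real.cosh_pos _)).deriv,
        (hdAt2 β γ (Real.cosh (γ * x₁)) (Real.sinh (γ * x₁)) x x₂ hb).deriv]
    refine ⟨hint1.congr (Filter.Eventually.of_forall fun x => (key1 x).symm),
      hint2.congr (Filter.Eventually.of_forall fun x => (key2 x).symm), ?_, ?_⟩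
    · rw [integral_congr_ae (Filter.Eventually.of_forall key1)]
      exact hzero1
    · rw [integral_congr_ae (Filter.Eventually.of_forall key2)]
      exact hzero2
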